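/- (Multivariate step in the proof of Lemma 1.) Let σ > 0, ε > 0, n ≥ 1, let x, w ∈ ℝⁿ and y ∈ ℝ. Then ∫_{ℝⁿ} k_ε(y − ⟨t, x⟩) · k_σ(w − t) dt = k_{√(ε² + σ²‖x‖²)}(y − ⟨w, x⟩), where ⟨·,·⟩ denotes the Euclidean inner product. -/

import Mathlib

open MeasureTheory Real
open scoped RealInnerProductSpace

/-- Isotropic Gaussian kernel on `ℝⁿ`: `k_σ(x) = (√(2π) σ)^{-n} exp(−‖x‖²/(2σ²))`. -/
noncomputable def gaussKernel (σ : ℝ) {n : ℕ} (x : EuclideanSpace ℝ (Fin n)) : ℝ :=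
  ((Real.sqrt (2 * Real.pi) * σ)⁻¹) ^ n * Real.exp (-‖x‖ ^ 2 / (2 * σ ^ 2))

/-- One-dimensional Gaussian kernel. -/
noncomputable def gauss1 (σ x : ℝ) : ℝ :=
  (Real.sqrt (2 * Real.pi) * σ)⁻¹ * Real.exp (-x ^ 2 / (2 * σ ^ 2))

lemma integral_rexp_quadratic {b : ℝ} (hb : b < 0) (c d : ℝ) :
    ∫ x : ℝ, Real.exp (b * x ^ 2 + c * x + d)
      = Real.sqrt (π / (-b)) * Real.exp (d - c ^ 2 / (4 * b)) := by
  have h := integral_cexp_quadratic (b := (b : ℂ)) (by simpa using hb) (c : ℂ) (d : ℂ)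
  have h1 : ∀ x : ℝ, ((Real.exp (b * x ^ 2 + c * x + d) : ℝ) : ℂ)
      = Complex.exp ((b : ℂ) * (x : ℂ) ^ 2 + (c : ℂ) * (x : ℂ) + (d : ℂ)) := by
    intro x
    rw [Complex.ofReal_exp]
    norm_cast
  rw [← RCLike.ofReal_inj (K := ℂ), ← integral_ofReal]
  simp_rw [RCLike.ofReal_alg, Complex.real_smul, mul_one, h1]
  rw [h]
  have e1 : ((π : ℂ) / -(b : ℂ)) = ((π / (-b) : ℝ) : ℂ) := by push_cast; ring
  have e2 : ((d : ℂ) - (c : ℂ) ^ 2 / (4 * (b : ℂ))) = ((d - c ^ 2 / (4 * b) : ℝ) : ℂ) := by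
    push_cast; ring
  rw [e1, e2, ← Complex.ofReal_exp, Real.sqrt_eq_rpow,
    show ((1 : ℂ) / 2 : ℂ) = ((1 / 2 : ℝ) : ℂ) by norm_num,
    ← Complex.ofReal_cpow (le_of_lt (div_pos pi_pos (by linarith))), ← Complex.ofReal_mul]

lemma gauss1_nonneg {σ : ℝ} (hσ : 0 < σ) (x : ℝ) : 0 ≤ gauss1 σ x := by
  unfold gauss1; positivity

lemma gauss1_le {σ : ℝ} (hσ : 0 < σ) (x : ℝ) :
    gauss1 σ x ≤ (Real.sqrt (2 * π) * σ)⁻¹ := by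
  unfold gauss1
  nth_rewrite 2 [← mul_one (Real.sqrt (2 * π) * σ)⁻¹]
  refine mul_le_mul_of_nonneg_left ?_ (by positivity)
  rw [Real.exp_le_one_iff]
  have : (0:ℝ) ≤ x ^ 2 / (2 * σ ^ 2) := by positivity
  rw [neg_div]; linarith

lemma continuous_gauss1 (σ : ℝ) : Continuous (gauss1 σ) := by
  unfold gauss1; fun_prop

lemma integrable_gauss1' {σ : ℝ} (hσ : 0 < σ) : Integrable (gauss1 σ) := by
  have h : Integrable (fun a : ℝ => Real.exp (-(1 / (2 * σ ^ 2)) * a ^ 2)) :=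
    integrable_exp_neg_mul_sq (by positivity)
  have heq : gauss1 σ = fun a : ℝ =>
      (Real.sqrt (2 * π) * σ)⁻¹ * Real.exp (-(1 / (2 * σ ^ 2)) * a ^ 2) := by
    funext a; unfold gauss1; congr 1; ring
  rw [heq]
  exact h.const_mul _

lemma integrable_gauss1 {σ : ℝ} (hσ : 0 < σ) (c : ℝ) :
    Integrable (fun a : ℝ => gauss1 σ (c - a)) :=
  (integrable_gauss1' hσ).comp_sub_left c

lemma gauss1_conv {ε σ : ℝ} (hε : 0 < ε) (hσ : 0 < σ) (c x0 w0 : ℝ) :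
    ∫ a : ℝ, gauss1 ε (c - a * x0) * gauss1 σ (w0 - a)
      = gauss1 (Real.sqrt (ε ^ 2 + σ ^ 2 * x0 ^ 2)) (c - w0 * x0) := by
  set b : ℝ := -(x0 ^ 2 / (2 * ε ^ 2) + 1 / (2 * σ ^ 2)) with hbdef
  have hbneg : b < 0 := by
    have h1 : (0:ℝ) < x0 ^ 2 / (2 * ε ^ 2) + 1 / (2 * σ ^ 2) := by positivity
    simp only [hbdef]; linarith
  set c' : ℝ := c * x0 / ε ^ 2 + w0 / σ ^ 2 with hc'def
  set d : ℝ := -(c ^ 2 / (2 * ε ^ 2)) - w0 ^ 2 / (2 * σ ^ 2) with hddef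
  have hexp : ∀ a : ℝ, gauss1 ε (c - a * x0) * gauss1 σ (w0 - a)
      = ((Real.sqrt (2 * π) * ε)⁻¹ * (Real.sqrt (2 * π) * σ)⁻¹)
        * Real.exp (b * a ^ 2 + c' * a + d) := by
    intro a
    unfold gauss1
    rw [mul_mul_mul_comm, ← Real.exp_add]
    congr 1
    simp only [hbdef, hc'def, hddef]
    field_simp
    ring
  simp_rw [hexp]
  rw [MeasureTheory.integral_const_mul, integral_rexp_quadratic hbneg]
  set s : ℝ := ε ^ 2 + σ ^ 2 * x0 ^ 2 with hsdef
  have hs0 : 0 < s := by positivity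
  have hτ : Real.sqrt s ^ 2 = s := Real.sq_sqrt hs0.le
  have hsqrt2π : Real.sqrt (2 * π) ^ 2 = 2 * π := Real.sq_sqrt (by positivity)
  unfold gauss1
  have hpib : π / (-b) = (Real.sqrt (2 * π) * ε * σ / Real.sqrt s) ^ 2 := by
    rw [div_pow, mul_pow, mul_pow, hsqrt2π, hτ]
    simp only [hbdef]
    field_simp
    ring
  have hsb : Real.sqrt (π / (-b)) = Real.sqrt (2 * π) * ε * σ / Real.sqrt s := by
    rw [hpib, Real.sqrt_sq (by positivity)]
  rw [hsb]
  have hexp2 : d - c' ^ 2 / (4 * b) = -(c - w0 * x0) ^ 2 / (2 * Real.sqrt s ^ 2) := by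
    rw [hτ]
    have hb' : b ≠ 0 := hbneg.ne
    have hs' : s ≠ 0 := hs0.ne'
    field_simp
    simp only [hbdef, hc'def, hddef, hsdef]
    field_simp
    ring
  rw [hexp2, ← mul_assoc]
  congr 1
  have hss : Real.sqrt s ≠ 0 := by positivity
  have h2π : Real.sqrt (2 * π) ≠ 0 := by positivity
  generalize Real.sqrt (2 * π) = A at *
  generalize Real.sqrt s = T at *
  field_simp

lemma key {σ : ℝ} (hσ : 0 < σ) :
    ∀ n : ℕ, ∀ ε : ℝ, 0 < ε → ∀ (x w : Fin n → ℝ) (y : ℝ),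
    (∫ t : Fin n → ℝ, gauss1 ε (y - ∑ i, t i * x i) * ∏ i, gauss1 σ (w i - t i))
      = gauss1 (Real.sqrt (ε ^ 2 + σ ^ 2 * ∑ i, x i ^ 2)) (y - ∑ i, w i * x i) := by
  intro n
  induction n with
  | zero =>
    intro ε hε x w y
    simp only [Finset.univ_eq_empty, Finset.sum_empty, Finset.prod_empty, mul_one]
    rw [MeasureTheory.integral_const]
    have hvol : (volume : Measure (Fin 0 → ℝ)) Set.univ = 1 := by
      rw [MeasureTheory.volume_pi, MeasureTheory.Measure.pi_univ]
      simp
    rw [measureReal_def, hvol]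
    simp [Real.sqrt_sq hε.le]
  | succ n ih =>
    intro ε hε x w y
    rw [MeasureTheory.volume_pi, ← ((measurePreserving_piFinSuccAbove
        (fun _ : Fin (n + 1) => (volume : Measure ℝ)) 0).symm).integral_comp']
    simp_rw [MeasurableEquiv.piFinSuccAbove_symm_apply, Fin.insertNthEquiv,
      Equiv.coe_fn_mk, Fin.insertNth_zero', Fin.sum_univ_succ, Fin.prod_univ_succ,
      Fin.cons_zero, Fin.cons_succ, sub_add_eq_sub_sub, ← MeasureTheory.volume_pi]
    have hInt : Integrable (fun p : ℝ × (Fin n → ℝ) =>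
        gauss1 ε (y - p.1 * x 0 - ∑ j, p.2 j * x (Fin.succ j)) *
          (gauss1 σ (w 0 - p.1) * ∏ j, gauss1 σ (w (Fin.succ j) - p.2 j)))
        ((volume : Measure ℝ).prod (volume : Measure (Fin n → ℝ))) := by
      have hb : Integrable (fun p : ℝ × (Fin n → ℝ) =>
          gauss1 σ (w 0 - p.1) * ∏ j, gauss1 σ (w (Fin.succ j) - p.2 j))
          ((volume : Measure ℝ).prod (volume : Measure (Fin n → ℝ))) :=
        (integrable_gauss1 hσ (w 0)).mul_prod
          (Integrable.fintype_prod (f := fun j a => gauss1 σ (w (Fin.succ j) - a))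
            (fun j => integrable_gauss1 hσ _))
      refine (hb.const_mul ((Real.sqrt (2 * π) * ε)⁻¹)).mono' ?_ ?_
      · apply Continuous.aestronglyMeasurable
        refine Continuous.mul ((continuous_gauss1 ε).comp (by fun_prop)) ?_
        refine Continuous.mul ((continuous_gauss1 σ).comp (by fun_prop)) ?_
        exact continuous_finset_prod _ fun j _ => (continuous_gauss1 σ).comp (by fun_prop)
      · refine Filter.Eventually.of_forall fun p => ?_
        have h1 : 0 ≤ gauss1 σ (w 0 - p.1) * ∏ j, gauss1 σ (w (Fin.succ j) - p.2 j) :=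
          mul_nonneg (gauss1_nonneg hσ _) (Finset.prod_nonneg fun j _ => gauss1_nonneg hσ _)
        rw [Real.norm_eq_abs, abs_of_nonneg (mul_nonneg (gauss1_nonneg hε _) h1)]
        exact mul_le_mul_of_nonneg_right (gauss1_le hε _) h1
    rw [MeasureTheory.integral_prod _ hInt]
    have hτpos : 0 < Real.sqrt (ε ^ 2 + σ ^ 2 * ∑ j : Fin n, x (Fin.succ j) ^ 2) :=
      Real.sqrt_pos.mpr (by positivity)
    have hinner : ∀ a : ℝ, (∫ t : Fin n → ℝ,
        gauss1 ε (y - a * x 0 - ∑ j, t j * x (Fin.succ j)) *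
          (gauss1 σ (w 0 - a) * ∏ j, gauss1 σ (w (Fin.succ j) - t j)))
        = gauss1 (Real.sqrt (ε ^ 2 + σ ^ 2 * ∑ j : Fin n, x (Fin.succ j) ^ 2))
            ((y - ∑ j, w (Fin.succ j) * x (Fin.succ j)) - a * x 0) * gauss1 σ (w 0 - a) := by
      intro a
      simp_rw [mul_left_comm]
      rw [MeasureTheory.integral_const_mul,
        ih ε hε (fun j => x (Fin.succ j)) (fun j => w (Fin.succ j)) (y - a * x 0),
        sub_right_comm, mul_comm]
    simp_rw [hinner]
    rw [gauss1_conv hτpos hσ (y - ∑ j, w (Fin.succ j) * x (Fin.succ j)) (x 0) (w 0),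
      Real.sq_sqrt (by positivity : (0:ℝ) ≤ ε ^ 2 + σ ^ 2 * ∑ j : Fin n, x (Fin.succ j) ^ 2)]
    congr 1
    · congr 1
      ring
    · ring

lemma gaussKernel_eq_prod {σ : ℝ} (hσ : 0 < σ) {n : ℕ} (v : EuclideanSpace ℝ (Fin n)) :
    gaussKernel σ v = ∏ i, gauss1 σ (v i) := by
  unfold gaussKernel gauss1
  rw [EuclideanSpace.norm_eq, Real.sq_sqrt (by positivity),
    Finset.prod_mul_distrib, Finset.prod_const, Finset.card_univ, Fintype.card_fin]
  congr 1
  rw [← Real.exp_sum]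
  congr 1
  rw [show -(∑ i, ‖v i‖ ^ 2) = ∑ i, -(v i) ^ 2 by
      simp [Real.norm_eq_abs, sq_abs], Finset.sum_div]

theorem gaussian_smoothing_linear_argument_kernel (σ ε : ℝ) (hσ : 0 < σ) (hε : 0 < ε)
    (n : ℕ) (hn : 1 ≤ n) (x w : EuclideanSpace ℝ (Fin n)) (y : ℝ) :
    (∫ t : EuclideanSpace ℝ (Fin n), gauss1 ε (y - ⟪t, x⟫) * gaussKernel σ (w - t)) =
      gauss1 (Real.sqrt (ε ^ 2 + σ ^ 2 * ‖x‖ ^ 2)) (y - ⟪w, x⟫) := by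
  have hinner : ∀ t : EuclideanSpace ℝ (Fin n), ⟪t, x⟫ = ∑ i, t i * x i := by
    intro t
    rw [PiLp.inner_apply]
    simp [RCLike.inner_apply, conj_trivial]
    exact Finset.sum_congr rfl fun i _ => mul_comm _ _
  have hnorm : ‖x‖ ^ 2 = ∑ i, x i ^ 2 := by
    rw [EuclideanSpace.norm_eq, Real.sq_sqrt (by positivity)]
    simp [Real.norm_eq_abs, sq_abs]
  have hmp := EuclideanSpace.volume_preserving_symm_measurableEquiv_toLp (Fin n)
  calc
    (∫ t : EuclideanSpace ℝ (Fin n), gauss1 ε (y - ⟪t, x⟫) * gaussKernel σ (w - t))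
        = ∫ t : EuclideanSpace ℝ (Fin n),
            (fun u : Fin n → ℝ => gauss1 ε (y - ∑ i, u i * x i) * ∏ i, gauss1 σ (w i - u i))
              (((MeasurableEquiv.toLp 2 (Fin n → ℝ)).symm) t) := by
        congr 1
        funext t
        simp only [MeasurableEquiv.coe_toLp_symm]
        rw [hinner t, gaussKernel_eq_prod hσ]
        congr 1
    _ = ∫ u : Fin n → ℝ, gauss1 ε (y - ∑ i, u i * x i) * ∏ i, gauss1 σ (w i - u i) :=
        hmp.integral_comp (MeasurableEquiv.measurableEmbedding _)
          (fun u : Fin n → ℝ => gauss1 ε (y - ∑ i, u i * x i) * ∏ i, gauss1 σ (w i - u i))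
    _ = gauss1 (Real.sqrt (ε ^ 2 + σ ^ 2 * ∑ i, x i ^ 2)) (y - ∑ i, w i * x i) :=
        key hσ n ε hε (fun i => x i) (fun i => w i) y
    _ = gauss1 (Real.sqrt (ε ^ 2 + σ ^ 2 * ‖x‖ ^ 2)) (y - ⟪w, x⟫) := by
        rw [hnorm, hinner w]
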